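/- arXiv:2008.13287 — 4 statements merged into one kernel-verified Lean document; each statement's English description precedes it below -/
import Mathlib

section
/- Assume that the compositional inverse ψ = φ^⟨-1⟩ of φ satisfies ψ(t) = t·h(ψ(t)), and let B be an upper triangular matrix satisfying A·B = B·A = I. Then for every nonnegative integer s and all 1 ≤ k ≤ n, [B^s]_{k,n} = (a_k/a_n)·C(n,k)·(d/dt)^{n-k}_{t=0}[ ((g(ψ(t)))^{-1})^s ], where (g∘ψ)^{-1} is the multiplicative inverse of the power series g∘ψ (which exists since g(0) ≠ 0) and C(n,k) is the binomial coefficient. -/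
open PowerSeries Finset

noncomputable section

/-- Product of two infinite matrices of complex numbers (indexed by positive integers,
upper triangular): `[A·B]_{k,n} = ∑_{j=k}^{n} [A]_{k,j}·[B]_{j,n}`. -/
def triMul (A B : ℕ → ℕ → ℂ) : ℕ → ℕ → ℂ :=
  fun k n => ∑ j ∈ Finset.Icc k n, A k j * B j n

/-- The identity matrix. -/
def triId : ℕ → ℕ → ℂ := fun k n => if k = n then 1 else 0

/-- Powers of a matrix: `A^0 = I`, `A^{s+1} = A^s · A`. -/
def triPow (A : ℕ → ℕ → ℂ) : ℕ → ℕ → ℕ → ℂ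
  | 0 => triId
  | s + 1 => triMul (triPow A s) A

/-- Composition `F ∘ G` of formal power series (intended for `G` with zero
constant coefficient): the coefficient of `t^n` is `∑_{j=0}^{n} F_j · [t^n](G^j)`. -/
def psComp (F G : PowerSeries ℂ) : PowerSeries ℂ :=
  PowerSeries.mk fun n =>
    ∑ j ∈ Finset.range (n + 1), (PowerSeries.coeff j F) * (PowerSeries.coeff n (G ^ j))

/-- Iterated composition: `φ^⟨0⟩ = t`, `φ^⟨s+1⟩ = φ^⟨s⟩ ∘ φ`. -/
def iterComp (φ : PowerSeries ℂ) : ℕ → PowerSeries ℂ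
  | 0 => PowerSeries.X
  | s + 1 => psComp (iterComp φ s) φ

lemma coeff_psComp (F G : PowerSeries ℂ) (n : ℕ) :
    coeff n (psComp F G) = ∑ j ∈ range (n + 1), coeff j F * coeff n (G ^ j) := by
  simp [psComp]

/-- If `constantCoeff G = 0` then `coeff n (G^j) = 0` for `n < j`. -/
lemma coeff_pow_eq_zero {G : PowerSeries ℂ} (hG : constantCoeff G = 0)
    {n j : ℕ} (hnj : n < j) : coeff n (G ^ j) = 0 := by
  obtain ⟨w, rfl⟩ := (PowerSeries.X_dvd_iff.mpr hG)
  rw [mul_pow, coeff_mul]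
  apply Finset.sum_eq_zero
  rintro ⟨p, q⟩ hpq
  rw [Finset.HasAntidiagonal.mem_antidiagonal] at hpq
  rw [PowerSeries.coeff_X_pow, if_neg, zero_mul]
  omega

lemma coeff_psComp_ext (F G : PowerSeries ℂ) (hG : constantCoeff G = 0) (n N : ℕ)
    (hN : n < N) :
    coeff n (psComp F G) = ∑ j ∈ range N, coeff j F * coeff n (G ^ j) := by
  rw [coeff_psComp]
  apply Finset.sum_subset
  · exact Finset.range_subset_range.mpr hN
  · intro j hj hj2
    simp only [Finset.mem_range, not_lt] at hj2
    rw [coeff_pow_eq_zero hG (by omega), mul_zero]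

lemma psComp_X_right (F : PowerSeries ℂ) : psComp F X = F := by
  ext n
  rw [coeff_psComp]
  rw [Finset.sum_eq_single n]
  · simp [PowerSeries.coeff_X_pow]
  · intro j hj hjn
    rw [PowerSeries.coeff_X_pow, if_neg (by omega), mul_zero]
  · intro hn; exact absurd (Finset.self_mem_range_succ n) hn

lemma psComp_X_left (G : PowerSeries ℂ) (hG : constantCoeff G = 0) : psComp X G = G := by
  ext n
  rw [coeff_psComp]
  rcases Nat.eq_zero_or_pos n with rfl | hn
  · simp [hG]
  · rw [Finset.sum_eq_single 1]
    · simp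
    · intro j hj hj1
      rcases Nat.eq_zero_or_pos j with rfl | hjp
      · simp [PowerSeries.coeff_one, Nat.pos_iff_ne_zero.mp hn]
      · rw [PowerSeries.coeff_X, if_neg (by omega), zero_mul]
    · intro hn1; exact absurd (Finset.mem_range.mpr (by omega)) hn1

lemma psComp_one_left (G : PowerSeries ℂ) : psComp 1 G = 1 := by
  ext n
  rw [coeff_psComp, Finset.sum_eq_single 0]
  · simp
  · intro j hj hj0; simp [PowerSeries.coeff_one, hj0]
  · intro hn; exact absurd (Finset.mem_range.mpr (by omega)) hn


lemma coeff_eval2 {H : PowerSeries ℂ} (hH : constantCoeff H = 0) (P : Polynomial ℂ) (n : ℕ) :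
    coeff n (P.eval₂ C H) = ∑ m ∈ range (n + 1), P.coeff m * coeff n (H ^ m) := by
  rw [Polynomial.eval₂_eq_sum_range, map_sum]
  set d := P.natDegree
  have key : ∀ m, (coeff n) (C (P.coeff m) * H ^ m) = P.coeff m * coeff n (H ^ m) := by
    intro m; rw [PowerSeries.coeff_C_mul]
  rcases le_or_gt (d + 1) (n + 1) with hle | hlt
  · rw [Finset.sum_congr rfl (fun m _ => key m)]
    apply Finset.sum_subset (Finset.range_subset_range.mpr hle)
    intro m hm hm2
    simp only [Finset.mem_range, not_lt] at hm2
    rw [Polynomial.coeff_eq_zero_of_natDegree_lt (by omega), zero_mul]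
  · rw [Finset.sum_congr rfl (fun m _ => key m)]
    symm
    apply Finset.sum_subset (Finset.range_subset_range.mpr hlt.le)
    intro m hm hm2
    simp only [Finset.mem_range, not_lt] at hm2
    rw [coeff_pow_eq_zero hH (by omega), mul_zero]

lemma coeff_psComp_eval2 {H : PowerSeries ℂ} (hH : constantCoeff H = 0) (F : PowerSeries ℂ)
    {n N : ℕ} (hN : n < N) :
    coeff n (psComp F H) = coeff n ((trunc N F).eval₂ C H) := by
  rw [coeff_eval2 hH, coeff_psComp]
  apply Finset.sum_congr rfl
  intro m hm
  rw [coeff_trunc, if_pos (by simp only [Finset.mem_range] at hm; omega)]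

lemma psComp_mul (F G H : PowerSeries ℂ) (hH : constantCoeff H = 0) :
    psComp (F * G) H = psComp F H * psComp G H := by
  ext n
  rw [coeff_psComp_eval2 hH (F * G) (Nat.lt_succ_self n)]
  have step1 : coeff n ((trunc (n+1) (F * G)).eval₂ C H)
      = coeff n ((trunc (n+1) F * trunc (n+1) G).eval₂ C H) := by
    rw [coeff_eval2 hH, coeff_eval2 hH]
    apply Finset.sum_congr rfl
    intro m hm
    have hmn : m < n + 1 := Finset.mem_range.mp hm
    have hc : coeff m ((trunc (n+1) F : PowerSeries ℂ) * (trunc (n+1) G : PowerSeries ℂ))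
        = coeff m (F * G) := by
      have h3 := congrArg (fun P => Polynomial.coeff P m) (PowerSeries.trunc_trunc_mul_trunc (n := n + 1) F G)
      simpa only [coeff_trunc, if_pos hmn] using h3
    have h1 : (trunc (n+1) (F * G)).coeff m = coeff m (F * G) := by
      rw [coeff_trunc, if_pos hmn]
    have h2 : (trunc (n+1) F * trunc (n+1) G).coeff m
        = coeff m ((trunc (n+1) F : PowerSeries ℂ) * (trunc (n+1) G : PowerSeries ℂ)) := by
      rw [← Polynomial.coe_mul, Polynomial.coeff_coe]
    rw [h1, h2, hc]
  rw [step1, Polynomial.eval₂_mul, PowerSeries.coeff_mul, PowerSeries.coeff_mul]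
  apply Finset.sum_congr rfl
  rintro ⟨p, q⟩ hpq
  rw [Finset.HasAntidiagonal.mem_antidiagonal] at hpq
  rw [← coeff_psComp_eval2 hH F (show p < n + 1 by omega),
      ← coeff_psComp_eval2 hH G (show q < n + 1 by omega)]

lemma psComp_pow (F H : PowerSeries ℂ) (hH : constantCoeff H = 0) (m : ℕ) :
    psComp (F ^ m) H = (psComp F H) ^ m := by
  induction m with
  | zero => simpa using psComp_one_left H
  | succ m ih => rw [pow_succ, pow_succ, psComp_mul _ _ _ hH, ih]

lemma constantCoeff_psComp (F G : PowerSeries ℂ) :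
    constantCoeff (psComp F G) = constantCoeff F := by
  have := coeff_psComp F G 0
  simpa [PowerSeries.coeff_zero_eq_constantCoeff] using this

lemma psComp_assoc (F G H : PowerSeries ℂ) (hG : constantCoeff G = 0)
    (hH : constantCoeff H = 0) :
    psComp (psComp F G) H = psComp F (psComp G H) := by
  ext n
  rw [coeff_psComp, coeff_psComp]
  have hGH : constantCoeff (psComp G H) = 0 := by rw [constantCoeff_psComp]; exact hG
  calc ∑ j ∈ range (n+1), coeff j (psComp F G) * coeff n (H ^ j)
      = ∑ j ∈ range (n+1), ∑ i ∈ range (n+1), coeff i F * coeff j (G ^ i) * coeff n (H ^ j) := by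
        apply Finset.sum_congr rfl
        intro j hj
        rw [coeff_psComp_ext F G hG j (n+1) (Finset.mem_range.mp hj), Finset.sum_mul]
    _ = ∑ i ∈ range (n+1), coeff i F * ∑ j ∈ range (n+1), coeff j (G ^ i) * coeff n (H ^ j) := by
        rw [Finset.sum_comm]
        apply Finset.sum_congr rfl
        intro i _
        rw [Finset.mul_sum]
        apply Finset.sum_congr rfl
        intro j _
        ring
    _ = ∑ i ∈ range (n+1), coeff i F * coeff n ((psComp G H) ^ i) := by
        apply Finset.sum_congr rfl
        intro i _
        rw [← psComp_pow G H hH i, coeff_psComp]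

lemma psComp_zero_left (G : PowerSeries ℂ) : psComp 0 G = 0 := by
  ext n; simp [coeff_psComp]

lemma psComp_add (F1 F2 G : PowerSeries ℂ) :
    psComp (F1 + F2) G = psComp F1 G + psComp F2 G := by
  ext n
  simp only [coeff_psComp, map_add, add_mul, Finset.sum_add_distrib]

lemma psComp_C_mul (c : ℂ) (F G : PowerSeries ℂ) :
    psComp (C c * F) G = C c * psComp F G := by
  ext n
  simp only [coeff_psComp, PowerSeries.coeff_C_mul, Finset.mul_sum, mul_assoc]

lemma psComp_sum {ι : Type*} (s : Finset ι) (F : ι → PowerSeries ℂ) (G : PowerSeries ℂ) :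
    psComp (∑ i ∈ s, F i) G = ∑ i ∈ s, psComp (F i) G := by
  classical
  induction s using Finset.induction_on with
  | empty => simp [psComp_zero_left]
  | insert _ _ hx ih => rw [Finset.sum_insert hx, Finset.sum_insert hx, psComp_add, ih]

lemma coeff_derivativeFun_old (f : PowerSeries ℂ) (n : ℕ) :
    coeff n (derivativeFun f) = coeff (n + 1) f * (n + 1) := coeff_derivative f n

lemma derivativeFun_C_old (r : ℂ) : derivativeFun (C r) = 0 := derivative_C

lemma derivativeFun_X' : derivativeFun (X : PowerSeries ℂ) = 1 := by
  ext n
  rw [coeff_derivativeFun_old]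
  simp [PowerSeries.coeff_X, PowerSeries.coeff_one]
  rcases n with _ | n <;> simp

lemma derivativeFun_C_mul (c : ℂ) (f : PowerSeries ℂ) :
    derivativeFun (C c * f) = C c * derivativeFun f := by
  rw [derivativeFun_mul, derivativeFun_C_old, smul_eq_mul, smul_eq_mul, mul_zero, add_zero]

lemma derivativeFun_pow (f : PowerSeries ℂ) (m : ℕ) :
    derivativeFun (f ^ (m + 1)) = (C (R := ℂ) (m + 1)) * (f ^ m * derivativeFun f) := by
  induction m with
  | zero => simp [pow_one, pow_zero, one_mul]
  | succ m ih =>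
    rw [pow_succ, derivativeFun_mul, ih, smul_eq_mul, smul_eq_mul]
    have hC : C (((m + 1 : ℕ) : ℂ) + 1) = C ((m : ℂ) + 1) + 1 := by
      push_cast; rw [map_add, map_one]
    rw [hC, pow_succ]
    ring

lemma coeff_derivativeFun' (f : PowerSeries ℂ) (d : ℕ) (hd : 1 ≤ d) :
    coeff (d - 1) (derivativeFun f) = (d : ℂ) * coeff d f := by
  obtain ⟨e, rfl⟩ : ∃ e, d = e + 1 := ⟨d - 1, by omega⟩
  rw [Nat.add_sub_cancel, coeff_derivativeFun_old]
  push_cast; ring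

lemma coeff_X_mul_pred (f : PowerSeries ℂ) (d : ℕ) (hd : 1 ≤ d) :
    coeff d ((X : PowerSeries ℂ) * f) = coeff (d - 1) f := by
  obtain ⟨e, rfl⟩ : ∃ e, d = e + 1 := ⟨d - 1, by omega⟩
  rw [PowerSeries.coeff_succ_X_mul]
  simp

lemma coeff_X_pow_mul_zero {p : PowerSeries ℂ} {m n : ℕ} (hmn : m < n) :
    coeff m ((X : PowerSeries ℂ) ^ n * p) = 0 := by
  rw [mul_comm, PowerSeries.coeff_mul_X_pow', if_neg (by omega)]

lemma h_sq_mul (h u : PowerSeries ℂ) (hu : h * u = 1) :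
    h ^ 2 * derivativeFun u = - derivativeFun h := by
  have h0 := congrArg derivativeFun hu
  rw [derivativeFun_mul, derivativeFun_one, smul_eq_mul, smul_eq_mul] at h0
  linear_combination h * h0 - derivativeFun h * hu

lemma coeff_pow_eq_coeff_pred (h : PowerSeries ℂ) (d : ℕ) (hd : 1 ≤ d) :
    coeff d (h ^ d) = coeff (d - 1) (h ^ (d - 1) * derivativeFun h) := by
  obtain ⟨e, rfl⟩ : ∃ e, d = e + 1 := ⟨d - 1, by omega⟩
  have e1 : derivativeFun (h ^ (e + 1)) = C ((e : ℂ) + 1) * (h ^ e * derivativeFun h) :=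
    derivativeFun_pow h e
  have e2 : coeff ((e + 1) - 1) (derivativeFun (h ^ (e + 1)))
      = ((e + 1 : ℕ) : ℂ) * coeff (e + 1) (h ^ (e + 1)) :=
    coeff_derivativeFun' _ _ (by omega)
  rw [e1, PowerSeries.coeff_C_mul] at e2
  have hne : ((e : ℂ) + 1) ≠ 0 := by
    have := Nat.cast_add_one_ne_zero (R := ℂ) e
    simpa using this
  have : ((e + 1 : ℕ) : ℂ) = (e : ℂ) + 1 := by push_cast; ring
  rw [this] at e2
  simp only [Nat.add_sub_cancel] at e2 ⊢
  exact (mul_left_cancel₀ hne e2.symm)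

/-- The core residue computation of Lagrange inversion. -/
lemma core (h u : PowerSeries ℂ) (hu : h * u = 1) (j i : ℕ) (hj : 1 ≤ j) :
    coeff (j - 1) (h ^ j * derivativeFun ((X * u) ^ i))
      = if i = j then (j : ℂ) else 0 := by
  rcases i with _ | m
  · rw [pow_zero, derivativeFun_one, mul_zero, map_zero, if_neg (by omega)]
  · rw [derivativeFun_pow, derivativeFun_mul X u, derivativeFun_X', smul_eq_mul, smul_eq_mul,
      mul_one]
    have hrearr : h ^ j * (C ((m : ℂ) + 1) * ((X * u) ^ m * (X * derivativeFun u + u)))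
        = C ((m : ℂ) + 1) * ((X : PowerSeries ℂ) ^ m
            * (h ^ j * u ^ m * (X * derivativeFun u + u))) := by ring
    rw [hrearr, PowerSeries.coeff_C_mul]
    set V := h ^ j * u ^ m * (X * derivativeFun u + u) with hV
    rcases lt_trichotomy (m + 1) j with hlt | heq | hgt
    · -- i < j, let d = j - 1 - m ≥ 1
      set d := j - 1 - m with hdd
      have hd1 : 1 ≤ d := by omega
      have hidx : j - 1 = d + m := by omega
      rw [hidx, PowerSeries.coeff_X_pow_mul]
      have idA : h ^ j * u ^ m * u = h ^ d := by
        calc h ^ j * u ^ m * u = h ^ d * (h * u) ^ (m + 1) := by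
              rw [show j = d + (m + 1) by omega]; ring
          _ = h ^ d := by rw [hu, one_pow, mul_one]
      have idB : h ^ j * u ^ m * derivativeFun u = -(h ^ (d - 1) * derivativeFun h) := by
        calc h ^ j * u ^ m * derivativeFun u
            = (h * u) ^ m * (h ^ (d - 1) * (h ^ 2 * derivativeFun u)) := by
              rw [show j = m + ((d - 1) + 2) by omega]; ring
          _ = -(h ^ (d - 1) * derivativeFun h) := by
              rw [hu, one_pow, one_mul, h_sq_mul h u hu]; ring
      have hVeq : V = h ^ d - X * (h ^ (d - 1) * derivativeFun h) := by
        rw [hV]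
        calc h ^ j * u ^ m * (X * derivativeFun u + u)
            = X * (h ^ j * u ^ m * derivativeFun u) + h ^ j * u ^ m * u := by ring
          _ = h ^ d - X * (h ^ (d - 1) * derivativeFun h) := by rw [idA, idB]; ring
      rw [hVeq, map_sub]
      rw [coeff_X_mul_pred _ d hd1, coeff_pow_eq_coeff_pred h d hd1, sub_self, mul_zero, if_neg (by omega)]
    · -- i = j
      rw [if_pos heq]
      have hm : m = j - 1 := by omega
      rw [show j - 1 = 0 + m by omega, PowerSeries.coeff_X_pow_mul]
      have hc0 : constantCoeff h * constantCoeff u = 1 := by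
        rw [← map_mul, hu, map_one]
      have : coeff 0 V = 1 := by
        rw [PowerSeries.coeff_zero_eq_constantCoeff, hV]
        simp only [map_mul, map_pow, map_add, PowerSeries.constantCoeff_X, zero_mul, zero_add]
        calc constantCoeff h ^ j * constantCoeff u ^ m * constantCoeff u
            = (constantCoeff h * constantCoeff u) ^ (m + 1) := by
              rw [show j = m + 1 by omega]; ring
          _ = 1 := by rw [hc0, one_pow]
      rw [this, mul_one, ← heq]
      push_cast; ring
    · -- i > j
      rw [coeff_X_pow_mul_zero (by omega), mul_zero, if_neg (by omega)]

lemma derivativeFun_zero : derivativeFun (0 : PowerSeries ℂ) = 0 := by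
  ext n; simp [coeff_derivativeFun_old]

lemma derivativeFun_sum {ι : Type*} (s : Finset ι) (F : ι → PowerSeries ℂ) :
    derivativeFun (∑ i ∈ s, F i) = ∑ i ∈ s, derivativeFun (F i) := by
  classical
  induction s using Finset.induction_on with
  | empty => simp [derivativeFun_zero]
  | insert _ _ hx ih => rw [Finset.sum_insert hx, Finset.sum_insert hx, derivativeFun_add, ih]

lemma coeff_trunc_sum (G : PowerSeries ℂ) (j m : ℕ) (hm : m ≤ j) :
    coeff m (∑ i ∈ range (j + 1), C (coeff i G) * X ^ i) = coeff m G := by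
  rw [map_sum, Finset.sum_eq_single m]
  · rw [PowerSeries.coeff_C_mul, PowerSeries.coeff_X_pow, if_pos rfl, mul_one]
  · intro i _ him
    rw [PowerSeries.coeff_C_mul, PowerSeries.coeff_X_pow, if_neg (fun hh => him hh.symm), mul_zero]
  · intro hmem; exact absurd (Finset.mem_range.mpr (by omega)) hmem

lemma coeff_hj_deriv_congr (h W1 W2 : PowerSeries ℂ) (j : ℕ) (hj : 1 ≤ j)
    (hW : ∀ m, m ≤ j → coeff m W1 = coeff m W2) :
    coeff (j - 1) (h ^ j * derivativeFun W1) = coeff (j - 1) (h ^ j * derivativeFun W2) := by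
  rw [PowerSeries.coeff_mul, PowerSeries.coeff_mul]
  apply Finset.sum_congr rfl
  rintro ⟨p, q⟩ hpq
  rw [Finset.HasAntidiagonal.mem_antidiagonal] at hpq
  rw [coeff_derivativeFun_old, coeff_derivativeFun_old, hW (q + 1) (by omega)]

lemma keyP (h u G : PowerSeries ℂ) (hu : h * u = 1) (j : ℕ) (hj : 1 ≤ j) :
    coeff (j - 1) (h ^ j * derivativeFun (psComp G (X * u)))
      = (j : ℂ) * coeff j G := by
  have hφ0 : constantCoeff ((X : PowerSeries ℂ) * u) = 0 := by
    rw [map_mul, PowerSeries.constantCoeff_X, zero_mul]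
  have step2 : ∀ m, m ≤ j → coeff m (psComp G (X * u))
      = coeff m (psComp (∑ i ∈ range (j + 1), C (coeff i G) * X ^ i) (X * u)) := by
    intro m hm
    rw [coeff_psComp, coeff_psComp]
    apply Finset.sum_congr rfl
    intro i hi
    rw [coeff_trunc_sum G j i (by simp only [Finset.mem_range] at hi; omega)]
  rw [coeff_hj_deriv_congr h _ _ j hj step2]
  have step1 : psComp (∑ i ∈ range (j + 1), C (coeff i G) * X ^ i) (X * u)
      = ∑ i ∈ range (j + 1), C (coeff i G) * (X * u) ^ i := by
    rw [psComp_sum]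
    apply Finset.sum_congr rfl
    intro i _
    rw [psComp_C_mul, psComp_pow _ _ hφ0, psComp_X_left _ hφ0]
  rw [step1, derivativeFun_sum, Finset.mul_sum, map_sum]
  have term : ∀ i ∈ range (j + 1),
      coeff (j - 1) (h ^ j * derivativeFun (C (coeff i G) * (X * u) ^ i))
        = coeff i G * (if i = j then (j : ℂ) else 0) := by
    intro i _
    rw [derivativeFun_C_mul]
    have : h ^ j * (C (coeff i G) * derivativeFun ((X * u) ^ i))
        = C (coeff i G) * (h ^ j * derivativeFun ((X * u) ^ i)) := by ring
    rw [this, PowerSeries.coeff_C_mul, core h u hu j i hj]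
  rw [Finset.sum_congr rfl term]
  rw [Finset.sum_eq_single j]
  · rw [if_pos rfl]; ring
  · intro i _ hij; rw [if_neg hij, mul_zero]
  · intro hmem; exact absurd (Finset.self_mem_range_succ j) hmem

lemma sum_Icc_comm (k n : ℕ) (f : ℕ → ℕ → ℂ) :
    ∑ j ∈ Icc k n, ∑ i ∈ Icc k j, f i j = ∑ i ∈ Icc k n, ∑ j ∈ Icc i n, f i j := by
  have L : ∑ j ∈ Icc k n, ∑ i ∈ Icc k j, f i j
      = ∑ j ∈ Icc k n, ∑ i ∈ Icc k n, (if i ≤ j then f i j else 0) := by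
    apply Finset.sum_congr rfl
    intro j hj
    rw [Finset.mem_Icc] at hj
    have step : ∑ i ∈ Icc k j, f i j = ∑ i ∈ Icc k j, if i ≤ j then f i j else 0 := by
      apply Finset.sum_congr rfl
      intro i hi
      rw [Finset.mem_Icc] at hi
      rw [if_pos hi.2]
    rw [step]
    apply Finset.sum_subset
    · exact Finset.Icc_subset_Icc_right hj.2
    · intro i hi hi2
      rw [Finset.mem_Icc] at hi
      rw [Finset.mem_Icc] at hi2
      rw [if_neg (by omega)]
  have R : ∑ i ∈ Icc k n, ∑ j ∈ Icc i n, f i j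
      = ∑ i ∈ Icc k n, ∑ j ∈ Icc k n, (if i ≤ j then f i j else 0) := by
    apply Finset.sum_congr rfl
    intro i hi
    rw [Finset.mem_Icc] at hi
    have step : ∑ j ∈ Icc i n, f i j = ∑ j ∈ Icc i n, if i ≤ j then f i j else 0 := by
      apply Finset.sum_congr rfl
      intro j hj
      rw [Finset.mem_Icc] at hj
      rw [if_pos hj.1]
    rw [step]
    apply Finset.sum_subset
    · exact Finset.Icc_subset_Icc_left hi.1
    · intro j hj hj2
      rw [Finset.mem_Icc] at hj
      rw [Finset.mem_Icc] at hj2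
      rw [if_neg (by omega)]
  rw [L, R, Finset.sum_comm]

lemma choose_fac {k j n : ℕ} (hkj : k ≤ j) (hjn : j ≤ n) :
    j.choose k * (j - k).factorial * (n.choose j * (n - j).factorial)
      = n.choose k * (n - k).factorial := by
  have h1 := Nat.choose_mul_factorial_mul_factorial hkj
  have h2 := Nat.choose_mul_factorial_mul_factorial hjn
  have h3 := Nat.choose_mul_factorial_mul_factorial (hkj.trans hjn)
  apply Nat.eq_of_mul_eq_mul_right k.factorial_pos
  calc j.choose k * (j - k).factorial * (n.choose j * (n - j).factorial) * k.factorial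
      = (j.choose k * k.factorial * (j - k).factorial) * (n.choose j * (n - j).factorial) := by
        ring
    _ = j.factorial * (n.choose j * (n - j).factorial) := by rw [h1]
    _ = n.choose j * j.factorial * (n - j).factorial := by ring
    _ = n.factorial := h2
    _ = n.choose k * k.factorial * (n - k).factorial := h3.symm
    _ = n.choose k * (n - k).factorial * k.factorial := by ring

lemma sum_Icc_coeff_mul (E F : PowerSeries ℂ) {k n : ℕ} (hkn : k ≤ n) :
    ∑ j ∈ Icc k n, coeff (j - k) E * coeff (n - j) F = coeff (n - k) (E * F) := by
  rw [PowerSeries.coeff_mul, Finset.Nat.sum_antidiagonal_eq_sum_range_succ_mk,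
    show Icc k n = Ico k (n + 1) by rw [Finset.Ico_add_one_right_eq_Icc], Finset.sum_Ico_eq_sum_range,
    show n + 1 - k = (n - k).succ by omega]
  apply Finset.sum_congr rfl
  intro p hp
  rw [Finset.mem_range] at hp
  have e1 : k + p - k = p := by omega
  have e2 : n - (k + p) = n - k - p := by omega
  rw [e1, e2]

def Dm (a : ℕ → ℂ) (F : PowerSeries ℂ) : ℕ → ℕ → ℂ :=
  fun k n => a k / a n * (n.choose k : ℂ) * (((n - k).factorial : ℂ) * coeff (n - k) F)

lemma triMul_assoc (M N P : ℕ → ℕ → ℂ) (k n : ℕ) :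
    triMul (triMul M N) P k n = triMul M (triMul N P) k n := by
  unfold triMul
  calc ∑ j ∈ Icc k n, (∑ i ∈ Icc k j, M k i * N i j) * P j n
      = ∑ j ∈ Icc k n, ∑ i ∈ Icc k j, M k i * N i j * P j n := by
        apply Finset.sum_congr rfl; intro j _; rw [Finset.sum_mul]
    _ = ∑ i ∈ Icc k n, ∑ j ∈ Icc i n, M k i * N i j * P j n := sum_Icc_comm k n _
    _ = ∑ i ∈ Icc k n, M k i * ∑ j ∈ Icc i n, N i j * P j n := by
        apply Finset.sum_congr rfl; intro i _
        rw [Finset.mul_sum]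
        apply Finset.sum_congr rfl; intro j _; ring

lemma triMul_triId (M : ℕ → ℕ → ℂ) {k n : ℕ} (hkn : k ≤ n) :
    triMul M triId k n = M k n := by
  unfold triMul triId
  rw [Finset.sum_eq_single n]
  · rw [if_pos rfl, mul_one]
  · intro j _ hjn; rw [if_neg hjn, mul_zero]
  · intro hmem; exact absurd (Finset.mem_Icc.mpr ⟨hkn, le_refl n⟩) hmem

lemma triId_triMul (M : ℕ → ℕ → ℂ) {k n : ℕ} (hkn : k ≤ n) :
    triMul triId M k n = M k n := by
  unfold triMul triId
  rw [Finset.sum_eq_single k]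
  · rw [if_pos rfl, one_mul]
  · intro j _ hjk; rw [if_neg (fun hh => hjk hh.symm), zero_mul]
  · intro hmem; exact absurd (Finset.mem_Icc.mpr ⟨le_refl k, hkn⟩) hmem

lemma Dm_mul (a : ℕ → ℂ) (ha : ∀ n, 1 ≤ n → a n ≠ 0) (F G : PowerSeries ℂ) {k n : ℕ}
    (hk : 1 ≤ k) (hkn : k ≤ n) :
    triMul (Dm a F) (Dm a G) k n = Dm a (F * G) k n := by
  unfold triMul Dm
  have key : ∀ j ∈ Icc k n,
      (a k / a j * (j.choose k : ℂ) * (((j - k).factorial : ℂ) * coeff (j - k) F)) *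
        (a j / a n * (n.choose j : ℂ) * (((n - j).factorial : ℂ) * coeff (n - j) G))
      = a k / a n * (n.choose k : ℂ) * ((n - k).factorial : ℂ) *
          (coeff (j - k) F * coeff (n - j) G) := by
    intro j hj
    rw [Finset.mem_Icc] at hj
    have haj : a j ≠ 0 := ha j (hk.trans hj.1)
    have hdiv : a k / a j * (a j / a n) = a k / a n := by
      field_simp
    have hcast : ((j.choose k : ℂ) * ((j - k).factorial : ℂ)) *
        ((n.choose j : ℂ) * ((n - j).factorial : ℂ))
        = (n.choose k : ℂ) * ((n - k).factorial : ℂ) := by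
      have := choose_fac hj.1 hj.2
      exact_mod_cast congrArg (Nat.cast : ℕ → ℂ) this
    calc (a k / a j * (j.choose k : ℂ) * (((j - k).factorial : ℂ) * coeff (j - k) F)) *
        (a j / a n * (n.choose j : ℂ) * (((n - j).factorial : ℂ) * coeff (n - j) G))
        = (a k / a j * (a j / a n)) * (((j.choose k : ℂ) * ((j - k).factorial : ℂ)) *
            ((n.choose j : ℂ) * ((n - j).factorial : ℂ))) *
            (coeff (j - k) F * coeff (n - j) G) := by ring
      _ = (a k / a n) * ((n.choose k : ℂ) * ((n - k).factorial : ℂ)) *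
            (coeff (j - k) F * coeff (n - j) G) := by rw [hdiv, hcast]
      _ = _ := by ring
  rw [Finset.sum_congr rfl key, ← Finset.mul_sum, sum_Icc_coeff_mul F G hkn]
  ring

lemma Dm_one (a : ℕ → ℂ) (ha : ∀ n, 1 ≤ n → a n ≠ 0) {k n : ℕ} (hk : 1 ≤ k) (hkn : k ≤ n) :
    Dm a 1 k n = triId k n := by
  unfold Dm triId
  rcases eq_or_lt_of_le hkn with rfl | hlt
  · rw [if_pos rfl]
    simp [div_self (ha k hk)]
  · rw [if_neg (by omega)]
    rw [PowerSeries.coeff_one, if_neg (by omega)]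
    ring

/-- Corollary: if the compositional inverse `ψ` of `φ` satisfies `ψ(t) = t·h(ψ(t))` and `B`
is an upper triangular two-sided inverse of `A`, then
`[B^s]_{k,n} = (a_k/a_n)·C(n,k)·(d/dt)^{n-k}_{t=0}[((g(ψ(t)))^{-1})^s]`. -/
theorem stmt8 (a : ℕ → ℂ) (ha : ∀ n, 1 ≤ n → a n ≠ 0)
    (φ g h : PowerSeries ℂ)
    (hφ0 : constantCoeff φ = 0)
    (hne : constantCoeff (derivativeFun φ) * constantCoeff g * constantCoeff h ≠ 0)
    (ψ : PowerSeries ℂ) (hψ0 : constantCoeff ψ = 0)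
    (hψφ : psComp ψ φ = PowerSeries.X) (hφψ : psComp φ ψ = PowerSeries.X)
    (hψ : ψ = PowerSeries.X * psComp h ψ)
    (A B : ℕ → ℕ → ℂ)
    (hAtri : ∀ k n, n < k → A k n = 0)
    (hBtri : ∀ k n, n < k → B k n = 0)
    (hA : ∀ k n, 1 ≤ k → k ≤ n →
      A k n = a k / a n * (1 / k.factorial) *
        (((n - 1).factorial : ℂ) * coeff (n - 1) (h ^ n * derivativeFun (φ ^ k * g))))
    (hAB : ∀ k n, 1 ≤ k → 1 ≤ n → triMul A B k n = triId k n)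
    (hBA : ∀ k n, 1 ≤ k → 1 ≤ n → triMul B A k n = triId k n)
    (s : ℕ) (k n : ℕ) (hk : 1 ≤ k) (hkn : k ≤ n) :
    triPow B s k n = a k / a n * (n.choose k : ℂ) *
      (((n - k).factorial : ℂ) * coeff (n - k) (((psComp g ψ)⁻¹) ^ s)) := by
  have hh0 : constantCoeff h ≠ 0 := fun hc => hne (by rw [hc, mul_zero])
  have hg0 : constantCoeff g ≠ 0 := fun hc => hne (by rw [hc, mul_zero, zero_mul])
  set u := h⁻¹ with hu_def
  have hu : h * u = 1 := PowerSeries.mul_inv_cancel h hh0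
  have hφh : φ * h = X := by
    have hc := congrArg (fun W => psComp W φ) hψ
    rw [psComp_mul X (psComp h ψ) φ hφ0, psComp_X_left φ hφ0,
        psComp_assoc h ψ φ hψ0 hφ0, hψφ, psComp_X_right] at hc
    exact hc.symm
  have hXu : φ = X * u := by
    calc φ = φ * (h * u) := by rw [hu, mul_one]
      _ = (φ * h) * u := by ring
      _ = X * u := by rw [hφh]
  set E := psComp g ψ with hE_def
  have hE0 : constantCoeff E ≠ 0 := by
    rw [hE_def, constantCoeff_psComp]; exact hg0
  have hEF : E * E⁻¹ = 1 := PowerSeries.mul_inv_cancel E hE0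
  -- Step 1 (Lagrange inversion): closed form for the entries of A
  have hAval : ∀ k' j, 1 ≤ k' → k' ≤ j →
      A k' j = a k' / a j * ((j.factorial : ℂ) / (k'.factorial : ℂ)) * coeff (j - k') E := by
    intro k' j hk' hkj
    have hj1 : 1 ≤ j := hk'.trans hkj
    rw [hA k' j hk' hkj]
    have hGcomp : psComp (X ^ k' * E) φ = φ ^ k' * g := by
      rw [psComp_mul _ _ _ hφ0, psComp_pow _ _ hφ0, psComp_X_left _ hφ0, hE_def,
          psComp_assoc g ψ φ hψ0 hφ0, hψφ, psComp_X_right]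
    have hkey : coeff (j - 1) (h ^ j * derivativeFun (φ ^ k' * g))
        = (j : ℂ) * coeff j (X ^ k' * E) := by
      rw [← hGcomp, hXu]
      exact keyP h u _ hu j hj1
    have hXE : coeff j (X ^ k' * E) = coeff (j - k') E := by
      rw [mul_comm, PowerSeries.coeff_mul_X_pow', if_pos hkj]
    rw [hkey, hXE]
    have hfac : ((j - 1).factorial : ℂ) * (j : ℂ) = (j.factorial : ℂ) := by
      obtain ⟨e, rfl⟩ : ∃ e, j = e + 1 := ⟨j - 1, by omega⟩
      rw [Nat.add_sub_cancel, Nat.factorial_succ]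
      push_cast; ring
    have hrearr : a k' / a j * (1 / (k'.factorial : ℂ)) *
        (((j - 1).factorial : ℂ) * ((j : ℂ) * coeff (j - k') E))
        = a k' / a j * ((((j - 1).factorial : ℂ) * (j : ℂ)) / (k'.factorial : ℂ)) *
          coeff (j - k') E := by ring
    rw [hrearr, hfac]
  -- Step 2: A · Dm a E⁻¹ = I
  have hAD : ∀ k' n', 1 ≤ k' → k' ≤ n' → triMul A (Dm a E⁻¹) k' n' = triId k' n' := by
    intro k' n' hk' hkn'
    unfold triMul
    have key : ∀ j ∈ Icc k' n', A k' j * Dm a E⁻¹ j n'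
        = a k' / a n' * ((n'.factorial : ℂ) / (k'.factorial : ℂ)) *
            (coeff (j - k') E * coeff (n' - j) E⁻¹) := by
      intro j hj
      rw [Finset.mem_Icc] at hj
      have haj : a j ≠ 0 := ha j (hk'.trans hj.1)
      rw [hAval k' j hk' hj.1]
      unfold Dm
      have hdiv : a k' / a j * (a j / a n') = a k' / a n' := by field_simp
      have hcast : (j.factorial : ℂ) * ((n'.choose j : ℂ) * ((n' - j).factorial : ℂ))
          = (n'.factorial : ℂ) := by
        have h2 : n'.choose j * j.factorial * (n' - j).factorial = n'.factorial :=
          Nat.choose_mul_factorial_mul_factorial hj.2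
        calc (j.factorial : ℂ) * ((n'.choose j : ℂ) * ((n' - j).factorial : ℂ))
            = ((n'.choose j * j.factorial * (n' - j).factorial : ℕ) : ℂ) := by push_cast; ring
          _ = (n'.factorial : ℂ) := by rw [h2]
      calc a k' / a j * ((j.factorial : ℂ) / (k'.factorial : ℂ)) * coeff (j - k') E *
            (a j / a n' * (n'.choose j : ℂ) * (((n' - j).factorial : ℂ) * coeff (n' - j) E⁻¹))
          = (a k' / a j * (a j / a n')) *
              (((j.factorial : ℂ) * ((n'.choose j : ℂ) * ((n' - j).factorial : ℂ))) /
                (k'.factorial : ℂ)) *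
              (coeff (j - k') E * coeff (n' - j) E⁻¹) := by ring
        _ = a k' / a n' * ((n'.factorial : ℂ) / (k'.factorial : ℂ)) *
              (coeff (j - k') E * coeff (n' - j) E⁻¹) := by rw [hdiv, hcast]
    rw [Finset.sum_congr rfl key, ← Finset.mul_sum, sum_Icc_coeff_mul E E⁻¹ hkn', hEF]
    unfold triId
    rcases eq_or_lt_of_le hkn' with rfl | hlt
    · rw [if_pos rfl]
      rw [Nat.sub_self, PowerSeries.coeff_zero_eq_constantCoeff, map_one, mul_one,
        div_self (ha k' hk'), one_mul, div_self]
      exact_mod_cast Nat.factorial_ne_zero k'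
    · rw [if_neg (by omega), PowerSeries.coeff_one, if_neg (by omega), mul_zero]
  -- Step 3: B = Dm a E⁻¹ on the upper triangle
  have hBD : ∀ k' n', 1 ≤ k' → k' ≤ n' → B k' n' = Dm a E⁻¹ k' n' := by
    intro k' n' hk' hkn'
    have e1 := triMul_assoc B A (Dm a E⁻¹) k' n'
    have eL : triMul (triMul B A) (Dm a E⁻¹) k' n' = Dm a E⁻¹ k' n' := by
      have estep : triMul (triMul B A) (Dm a E⁻¹) k' n'
          = triMul triId (Dm a E⁻¹) k' n' := by
        unfold triMul
        apply Finset.sum_congr rfl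
        intro j hj
        rw [Finset.mem_Icc] at hj
        rw [show (∑ i ∈ Icc k' j, B k' i * A i j) = triMul B A k' j from rfl,
          hBA k' j hk' (hk'.trans hj.1)]
      rw [estep, triId_triMul _ hkn']
    have eR : triMul B (triMul A (Dm a E⁻¹)) k' n' = B k' n' := by
      have estep : triMul B (triMul A (Dm a E⁻¹)) k' n' = triMul B triId k' n' := by
        unfold triMul
        apply Finset.sum_congr rfl
        intro j hj
        rw [Finset.mem_Icc] at hj
        rw [show (∑ i ∈ Icc j n', A j i * Dm a E⁻¹ i n') = triMul A (Dm a E⁻¹) j n' from rfl,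
          hAD j n' (hk'.trans hj.1) hj.2]
      rw [estep, triMul_triId _ hkn']
    exact eR.symm.trans (e1.symm.trans eL)
  -- Step 4: induction on s
  have main : ∀ s k' n', 1 ≤ k' → k' ≤ n' →
      triPow B s k' n' = Dm a (E⁻¹ ^ s) k' n' := by
    intro s
    induction s with
    | zero =>
      intro k' n' h1 h2
      show triId k' n' = _
      rw [pow_zero]
      exact (Dm_one a ha h1 h2).symm
    | succ s ih =>
      intro k' n' h1 h2
      show triMul (triPow B s) B k' n' = _
      have estep : triMul (triPow B s) B k' n'
          = triMul (Dm a (E⁻¹ ^ s)) (Dm a E⁻¹) k' n' := by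
        unfold triMul
        apply Finset.sum_congr rfl
        intro j hj
        rw [Finset.mem_Icc] at hj
        rw [ih k' j h1 hj.1, hBD j n' (h1.trans hj.1) hj.2]
      rw [estep, Dm_mul a ha _ _ h1 h2, ← pow_succ]
  rw [main s k n hk hkn]
  unfold Dm
  ring
end
end

section
/- Let α, β be complex numbers and let A be the upper triangular matrix with entries [A]_{k,n} = C(n,k)·β^{n-k}·(α+n-1)_{n-k} for 1 ≤ k ≤ n, where (x)_0 = 1 and (x)_m = x(x-1)⋯(x-m+1) is the falling factorial and C(n,k) the binomial coefficient. Then for every nonnegative integer s and all 1 ≤ k ≤ n, [A^s]_{k,n} = s^{n-k}·[A]_{k,n} = C(n,k)·(βs)^{n-k}·(α+n-1)_{n-k}. -/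
open PowerSeries Finset

noncomputable section

/-- The falling factorial `(x)_m = x(x-1)⋯(x-m+1)` of a complex number, `(x)_0 = 1`. -/
def fallFac (x : ℂ) : ℕ → ℂ
  | 0 => 1
  | m + 1 => fallFac x m * (x - m)

/-- Example: for `[A]_{k,n} = C(n,k)·β^{n-k}·(α+n-1)_{n-k}` one has
`[A^s]_{k,n} = s^{n-k}·[A]_{k,n} = C(n,k)·(βs)^{n-k}·(α+n-1)_{n-k}`. -/
theorem stmt15 (α β : ℂ)
    (A : ℕ → ℕ → ℂ)
    (hAtri : ∀ k n, n < k → A k n = 0)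
    (hA : ∀ k n, 1 ≤ k → k ≤ n →
      A k n = (n.choose k : ℂ) * β ^ (n - k) * fallFac (α + n - 1) (n - k))
    (s : ℕ) (k n : ℕ) (hk : 1 ≤ k) (hkn : k ≤ n) :
    triPow A s k n = (s : ℂ) ^ (n - k) * A k n ∧
      triPow A s k n = (n.choose k : ℂ) * (β * s) ^ (n - k) * fallFac (α + n - 1) (n - k) := by
  have key : ∀ s k n : ℕ, 1 ≤ k → k ≤ n → triPow A s k n = (s : ℂ) ^ (n - k) * A k n := by
    intro s
    induction s with
    | zero =>
      intro k n hk hkn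
      rcases eq_or_lt_of_le hkn with rfl | h
      · simp [triPow, triId, hA k k hk le_rfl, fallFac]
      · have : (0:ℂ) ^ (n - k) = 0 := by
          apply zero_pow; omega
        simp [triPow, triId, Nat.ne_of_lt h, this]
    | succ s ih =>
      intro k n hk hkn
      have hstep : triPow A (s+1) k n =
          ∑ j ∈ Finset.Icc k n, (s : ℂ) ^ (j - k) * A k j * A j n := by
        simp only [triPow, triMul]
        refine Finset.sum_congr rfl fun j hj => ?_
        rw [Finset.mem_Icc] at hj
        rw [ih k j hk hj.1]
      rw [hstep]
      set m := n - k with hm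
      have hn : n = k + m := by omega
      -- rewrite as sum over range
      have hIcc : Finset.Icc k n = Finset.Ico k (n+1) := by
        rw [Finset.Ico_add_one_right_eq_Icc]
      rw [hIcc, Finset.sum_Ico_eq_sum_range]
      have hrange : n + 1 - k = m + 1 := by omega
      rw [hrange]
      -- rewrite each term
      have hterm : ∀ i ∈ Finset.range (m+1),
          (s : ℂ) ^ (k + i - k) * A k (k+i) * A (k+i) n =
          ((s:ℂ)^i * ((n-k).choose i : ℂ)) * ((n.choose k : ℂ) * β ^ m * fallFac (α + n - 1) m) := by
        intro i hi
        rw [Finset.mem_range] at hi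
        have hi' : i ≤ m := by omega
        have hki : k + i ≤ n := by omega
        rw [hA k (k+i) hk (by omega), hA (k+i) n (by omega) hki]
        have e1 : k + i - k = i := by omega
        have e2 : n - (k + i) = m - i := by omega
        rw [e1, e2]
        -- choose identity
        have hch : (n.choose (k+i) : ℂ) * ((k+i).choose k : ℂ) =
            (n.choose k : ℂ) * ((n-k).choose i : ℂ) := by
          rw [← Nat.cast_mul, ← Nat.cast_mul, Nat.choose_mul (Nat.le_add_right k i), e1]
        -- falling factorial identity
        have hff : ∀ (x : ℂ) (a b : ℕ), fallFac x (a + b) = fallFac x a * fallFac (x - a) b := by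
          intro x a b
          induction b with
          | zero => simp [fallFac]
          | succ b ihb =>
            show fallFac x (a + b) * (x - ((a:ℕ)+b : ℕ)) = _
            rw [ihb]
            show _ = fallFac x a * (fallFac (x - a) b * (x - a - b))
            push_cast
            ring
        have hcast : ((m - i : ℕ) : ℂ) = (n : ℂ) - (k:ℂ) - (i:ℂ) := by
          have h1 : ((m - i : ℕ) : ℂ) = (m : ℂ) - (i : ℂ) := by
            push_cast [Nat.cast_sub hi']; ring
          rw [h1, hm]
          push_cast [Nat.cast_sub hkn]
          ring
        have harg : (α + (n:ℂ) - 1) - ((m - i : ℕ) : ℂ) = α + ((k+i : ℕ) : ℂ) - 1 := by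
          rw [hcast]; push_cast; ring
        have hfall : fallFac (α + n - 1) m =
            fallFac (α + n - 1) (m - i) * fallFac (α + ((k+i : ℕ) : ℂ) - 1) i := by
          have hmi : m = (m - i) + i := by omega
          calc fallFac (α + (n:ℂ) - 1) m
              = fallFac (α + (n:ℂ) - 1) ((m - i) + i) := by rw [← hmi]
            _ = fallFac (α + (n:ℂ) - 1) (m - i) *
                fallFac ((α + (n:ℂ) - 1) - ((m - i : ℕ):ℂ)) i := hff _ _ _
            _ = _ := by rw [harg]
        have hbeta : β ^ i * β ^ (m - i) = β ^ m := by
          rw [← pow_add]; congr 1; omega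
        rw [hfall]
        linear_combination ((s:ℂ)^i * β^i * β^(m-i) * fallFac (α + ((k+i:ℕ):ℂ) - 1) i *
            fallFac (α + (n:ℂ) - 1) (m-i)) * hch +
          ((s:ℂ)^i * (n.choose k : ℂ) * ((n-k).choose i : ℂ) *
            fallFac (α + ((k+i:ℕ):ℂ) - 1) i * fallFac (α + (n:ℂ) - 1) (m-i)) * hbeta
      rw [Finset.sum_congr rfl hterm, ← Finset.sum_mul]
      have hbin : ∑ i ∈ Finset.range (m+1), (s:ℂ)^i * ((n-k).choose i : ℂ) =
          ((s:ℂ) + 1) ^ m := by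
        rw [add_pow]
        refine Finset.sum_congr rfl fun i hi => ?_
        rw [← hm]
        ring
      rw [hbin, hA k n hk hkn, ← hm]
      push_cast
      ring
  have h1 := key s k n hk hkn
  refine ⟨h1, ?_⟩
  rw [h1, hA k n hk hkn]
  ring
end
end

section
/- Let α, β be complex numbers and let A be the upper triangular matrix with entries [A]_{k,n} = C(n,k)·β^{n-k}·(α+n-1)_{n-k} for 1 ≤ k ≤ n. Then for every complex number z and all 1 ≤ k ≤ n, the series ∑_{s=0}^{∞} [A^s]_{k,n}·z^s/s! converges and equals [A]_{k,n}·B_{n-k}(z)·e^z, where B_m(z) = ∑_{j=0}^{m} S(m,j)·z^j is the Bell polynomial and S(m,j) is the Stirling number of the second kind. -/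
open PowerSeries Finset

noncomputable section

/-- Stirling numbers of the second kind: `S(m+1,j+1) = (j+1)·S(m,j+1) + S(m,j)`. -/
def stirling2 : ℕ → ℕ → ℕ
  | 0, 0 => 1
  | 0, _ + 1 => 0
  | _ + 1, 0 => 0
  | m + 1, j + 1 => (j + 1) * stirling2 m (j + 1) + stirling2 m j

/-- The Bell polynomial `B_m(z) = ∑_{j=0}^{m} S(m,j)·z^j`. -/
def bellPoly (m : ℕ) (z : ℂ) : ℂ :=
  ∑ j ∈ Finset.range (m + 1), (stirling2 m j : ℂ) * z ^ j

lemma fallFac_succ (x : ℂ) (m : ℕ) : fallFac x (m+1) = fallFac x m * (x - m) := rfl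

lemma fallFac_add (x : ℂ) (a b : ℕ) :
    fallFac x (a + b) = fallFac x a * fallFac (x - a) b := by
  induction b with
  | zero => simp [fallFac]
  | succ b ih =>
    show fallFac x (a + b) * (x - ((a:ℕ) + b : ℕ)) = fallFac x a * (fallFac (x - a) b * (x - a - b))
    rw [ih]; push_cast; ring

lemma fallFac_nat (s m : ℕ) : fallFac (s:ℂ) m = (s.descFactorial m : ℂ) := by
  induction m with
  | zero => simp [fallFac]
  | succ m ih =>
    rw [fallFac_succ, ih, Nat.descFactorial_succ]
    rcases lt_or_ge s m with h | h
    · rw [Nat.descFactorial_eq_zero_iff_lt.2 h]; simp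
    · rw [Nat.cast_mul, Nat.cast_sub h]; ring

lemma stirling2_eq_zero {m j : ℕ} (h : m < j) : stirling2 m j = 0 := by
  induction m generalizing j with
  | zero => match j, h with | j+1, _ => rfl
  | succ m ih =>
    match j, h with
    | j+1, h =>
      show (j + 1) * stirling2 m (j + 1) + stirling2 m j = 0
      rw [ih (by omega), ih (by omega)]; ring

lemma stirling_fall (m : ℕ) (x : ℂ) :
    x ^ m = ∑ j ∈ Finset.range (m + 1), (stirling2 m j : ℂ) * fallFac x j := by
  induction m with
  | zero => simp [stirling2, fallFac]
  | succ m ih =>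
    have key : ∀ j : ℕ, x * fallFac x j = fallFac x (j+1) + (j : ℂ) * fallFac x j := by
      intro j; rw [fallFac_succ]; ring
    rw [pow_succ, ih, Finset.sum_mul]
    have h1 : ∀ j ∈ Finset.range (m+1),
        (stirling2 m j : ℂ) * fallFac x j * x
          = (stirling2 m j : ℂ) * fallFac x (j+1) + (stirling2 m j : ℂ) * ((j:ℂ) * fallFac x j) := by
      intro j _; rw [mul_comm _ x, ← mul_assoc, mul_comm x _, mul_assoc, key]; ring
    rw [Finset.sum_congr rfl h1, Finset.sum_add_distrib]
    -- RHS
    rw [Finset.sum_range_succ' (fun i => (stirling2 (m+1) i : ℂ) * fallFac x i) (m+1)]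
    have h0 : (stirling2 (m+1) 0 : ℂ) * fallFac x 0 = 0 := by
      show ((0:ℕ) : ℂ) * fallFac x 0 = 0
      simp
    rw [h0, add_zero]
    have h2 : ∀ j ∈ Finset.range (m+1),
        (stirling2 (m+1) (j+1) : ℂ) * fallFac x (j+1)
          = (stirling2 m j : ℂ) * fallFac x (j+1)
            + ((j:ℂ)+1) * (stirling2 m (j+1) : ℂ) * fallFac x (j+1) := by
      intro j _
      have : stirling2 (m+1) (j+1) = (j + 1) * stirling2 m (j + 1) + stirling2 m j := rfl
      rw [this]; push_cast; ring
    rw [Finset.sum_congr rfl h2, Finset.sum_add_distrib]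
    congr 1
    -- need ∑ j in range(m+1), S(m,j) * (j * fallFac x j) = ∑ j in range(m+1), (j+1) S(m,j+1) fallFac x (j+1)
    rw [Finset.sum_range_succ' (fun j => (stirling2 m j : ℂ) * ((j:ℂ) * fallFac x j)) m]
    simp only [Nat.cast_zero, zero_mul, mul_zero, add_zero]
    rw [Finset.sum_range_succ (fun j => ((j:ℂ)+1) * (stirling2 m (j+1):ℂ) * fallFac x (j+1))]
    rw [stirling2_eq_zero (Nat.lt_succ_self m)]
    simp only [Nat.cast_zero, mul_zero, zero_mul, add_zero]
    exact Finset.sum_congr rfl (fun j _ => by push_cast; ring)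

lemma descFac_fac (j t : ℕ) :
    (t + j).descFactorial j * t.factorial = (t + j).factorial := by
  rw [mul_comm]
  have := Nat.factorial_mul_descFactorial (show j ≤ t + j from Nat.le_add_left _ _)
  rwa [Nat.add_sub_cancel] at this

lemma hasSum_exp (z : ℂ) :
    HasSum (fun t : ℕ => z ^ t / (t.factorial : ℂ)) (Complex.exp z) := by
  rw [Complex.exp_eq_exp_ℂ]
  exact NormedSpace.expSeries_div_hasSum_exp z

lemma hasSum_fallFac (z : ℂ) (j : ℕ) :
    HasSum (fun s : ℕ => fallFac (s:ℂ) j * z ^ s / (s.factorial : ℂ))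
      (z ^ j * Complex.exp z) := by
  have h2 : HasSum (fun t : ℕ => z ^ j * (z ^ t / (t.factorial : ℂ))) (z ^ j * Complex.exp z) :=
    (hasSum_exp z).mul_left _
  have hinj : Function.Injective (fun t : ℕ => t + j) := fun a b h => by simpa using h
  have hzero : ∀ s ∉ Set.range (fun t : ℕ => t + j),
      fallFac (s:ℂ) j * z ^ s / (s.factorial : ℂ) = 0 := by
    intro s hs
    have hslt : s < j := by
      by_contra h
      exact hs ⟨s - j, by simp; omega⟩
    rw [fallFac_nat, Nat.descFactorial_eq_zero_iff_lt.2 hslt]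
    simp
  refine (hinj.hasSum_iff hzero).1 (h2.congr_fun fun t => ?_)
  show fallFac ((t + j : ℕ):ℂ) j * z ^ (t + j) / ((t + j).factorial : ℂ)
      = z ^ j * (z ^ t / (t.factorial : ℂ))
  rw [fallFac_nat]
  have hfac : ((t + j).factorial : ℂ) = ((t + j).descFactorial j : ℂ) * (t.factorial : ℂ) := by
    rw [← Nat.cast_mul, descFac_fac]
  have hd : ((t + j).descFactorial j : ℂ) ≠ 0 := by
    have : (t + j).descFactorial j ≠ 0 := by
      rw [Ne, Nat.descFactorial_eq_zero_iff_lt]; omega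
    exact_mod_cast this
  have hf : (t.factorial : ℂ) ≠ 0 := by exact_mod_cast t.factorial_ne_zero
  rw [hfac, pow_add]
  field_simp

lemma dobinski (z : ℂ) (m : ℕ) :
    HasSum (fun s : ℕ => (s:ℂ) ^ m * z ^ s / (s.factorial : ℂ))
      (bellPoly m z * Complex.exp z) := by
  have h : ∀ s : ℕ, (s:ℂ) ^ m * z ^ s / (s.factorial : ℂ)
      = ∑ j ∈ Finset.range (m + 1),
          (stirling2 m j : ℂ) * (fallFac (s:ℂ) j * z ^ s / (s.factorial : ℂ)) := by
    intro s
    rw [stirling_fall m (s:ℂ), Finset.sum_mul, Finset.sum_div]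
    exact Finset.sum_congr rfl (fun j _ => by ring)
  have hs : HasSum (fun s : ℕ => ∑ j ∈ Finset.range (m + 1),
        (stirling2 m j : ℂ) * (fallFac (s:ℂ) j * z ^ s / (s.factorial : ℂ)))
      (∑ j ∈ Finset.range (m + 1), (stirling2 m j : ℂ) * (z ^ j * Complex.exp z)) :=
    hasSum_sum fun j _ => (hasSum_fallFac z j).mul_left _
  have : (∑ j ∈ Finset.range (m + 1), (stirling2 m j : ℂ) * (z ^ j * Complex.exp z))
      = bellPoly m z * Complex.exp z := by
    rw [bellPoly, Finset.sum_mul]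
    exact Finset.sum_congr rfl (fun j _ => by ring)
  rw [← this]
  exact hs.congr_fun h

lemma prodEntry (α β : ℂ) (A : ℕ → ℕ → ℂ)
    (hA : ∀ k n, 1 ≤ k → k ≤ n →
      A k n = (n.choose k : ℂ) * β ^ (n - k) * fallFac (α + n - 1) (n - k))
    (k j n : ℕ) (hk : 1 ≤ k) (hkj : k ≤ j) (hjn : j ≤ n) :
    A k j * A j n = A k n * (((n - k).choose (j - k) : ℕ) : ℂ) := by
  rw [hA k j hk hkj, hA j n (le_trans hk hkj) hjn, hA k n hk (le_trans hkj hjn)]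
  have hch' : (j.choose k : ℂ) * (n.choose j : ℂ)
      = (n.choose k : ℂ) * (((n - k).choose (j - k) : ℕ) : ℂ) := by
    have h := Nat.choose_mul (n := n) hkj
    have : ((n.choose j * j.choose k : ℕ) : ℂ) = ((n.choose k * (n - k).choose (j - k) : ℕ) : ℂ) := by
      rw [h]
    push_cast at this
    linear_combination this
  have hb : β ^ (j - k) * β ^ (n - j) = β ^ (n - k) := by
    rw [← pow_add]; congr 1; omega
  have hf : fallFac (α + n - 1) (n - k)
      = fallFac (α + n - 1) (n - j) * fallFac (α + j - 1) (j - k) := by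
    have h1 : n - k = (n - j) + (j - k) := by omega
    rw [h1, fallFac_add]
    congr 2
    rw [Nat.cast_sub hjn]; ring
  rw [hf, ← hb]
  linear_combination (β ^ (j - k) * β ^ (n - j)
    * (fallFac (α + ↑n - 1) (n - j) * fallFac (α + ↑j - 1) (j - k))) * hch'

lemma powEntry (α β : ℂ) (A : ℕ → ℕ → ℂ)
    (hA : ∀ k n, 1 ≤ k → k ≤ n →
      A k n = (n.choose k : ℂ) * β ^ (n - k) * fallFac (α + n - 1) (n - k)) :
    ∀ s k n, 1 ≤ k → k ≤ n → triPow A s k n = A k n * (s : ℂ) ^ (n - k) := by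
  intro s
  induction s with
  | zero =>
    intro k n hk hkn
    by_cases h : k = n
    · subst h
      show triId k k = _
      rw [hA k k hk le_rfl]
      simp [triId, fallFac]
    · show triId k n = _
      rw [triId]
      simp only [if_neg h]
      rw [Nat.cast_zero, zero_pow (show n - k ≠ 0 by omega), mul_zero]
  | succ s ih =>
    intro k n hk hkn
    show triMul (triPow A s) A k n = _
    rw [triMul]
    have hterm : ∀ j ∈ Finset.Icc k n,
        triPow A s k j * A j n
          = A k n * ((((n - k).choose (j - k) : ℕ) : ℂ) * (s : ℂ) ^ (j - k)) := by
      intro j hj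
      rw [Finset.mem_Icc] at hj
      rw [ih k j hk hj.1,
        show A k j * (s:ℂ) ^ (j - k) * A j n = A k j * A j n * (s:ℂ) ^ (j - k) by ring,
        prodEntry α β A hA k j n hk hj.1 hj.2]
      ring
    rw [Finset.sum_congr rfl hterm, ← Finset.mul_sum]
    congr 1
    rw [← Finset.Ico_add_one_right_eq_Icc, Finset.sum_Ico_eq_sum_range]
    have h1 : n + 1 - k = (n - k) + 1 := by omega
    rw [h1]
    have h2 : ∀ i ∈ Finset.range ((n - k) + 1),
        (((n - k).choose (k + i - k) : ℕ) : ℂ) * (s : ℂ) ^ (k + i - k)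
          = (s : ℂ) ^ i * 1 ^ ((n - k) - i) * (((n - k).choose i : ℕ) : ℂ) := by
      intro i _
      rw [Nat.add_sub_cancel_left]
      ring
    rw [Finset.sum_congr rfl h2, ← add_pow]
    push_cast
    ring

/-- Example: for `[A]_{k,n} = C(n,k)·β^{n-k}·(α+n-1)_{n-k}`, the matrix exponential series
converges entrywise: `∑_{s≥0} [A^s]_{k,n}·z^s/s! = [A]_{k,n}·B_{n-k}(z)·e^z`. -/
theorem stmt16 (α β : ℂ)
    (A : ℕ → ℕ → ℂ)
    (hAtri : ∀ k n, n < k → A k n = 0)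
    (hA : ∀ k n, 1 ≤ k → k ≤ n →
      A k n = (n.choose k : ℂ) * β ^ (n - k) * fallFac (α + n - 1) (n - k))
    (z : ℂ) (k n : ℕ) (hk : 1 ≤ k) (hkn : k ≤ n) :
    HasSum (fun s : ℕ => triPow A s k n * z ^ s / (s.factorial : ℂ))
      (A k n * bellPoly (n - k) z * Complex.exp z) := by
  have hp := powEntry α β A hA
  have heq : ∀ s : ℕ, triPow A s k n * z ^ s / (s.factorial : ℂ)
      = A k n * ((s : ℂ) ^ (n - k) * z ^ s / (s.factorial : ℂ)) := by
    intro s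
    rw [hp s k n hk hkn]
    ring
  rw [mul_assoc]
  exact ((dobinski z (n - k)).mul_left (A k n)).congr_fun heq
end
end

section
/- Let α be a nonzero complex number and let A be the upper triangular matrix with entries [A]_{k,n} = (1/k!)·∑_{j=0}^{k} (-1)^{k-j}·C(k,j)·(αj)_n for 1 ≤ k ≤ n (these are the partial Bell polynomial values B_{n,k}((1+t)^α - 1)). Then for every nonnegative integer s and all 1 ≤ k ≤ n, [A^s]_{k,n} = (1/k!)·∑_{j=0}^{k} (-1)^{k-j}·C(k,j)·(α^s j)_n. -/
open PowerSeries Finset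

noncomputable section

/-! ### Auxiliary lemmas -/

lemma fallFac_eq_poch (x : ℂ) (m : ℕ) :
    fallFac x m = (descPochhammer ℂ m).eval x := by
  induction m with
  | zero => simp [fallFac]
  | succ m ih => rw [fallFac, ih, descPochhammer_succ_right]; simp

lemma fallFac_nat_s18 (r m : ℕ) : fallFac (r : ℂ) m = (r.descFactorial m : ℂ) := by
  rw [fallFac_eq_poch, descPochhammer_eval_eq_descFactorial]

/-- The polynomial whose value at `z` is `fallFac (y*z) n`. -/
def Py (y : ℂ) (n : ℕ) : Polynomial ℂ :=
  ∏ t ∈ Finset.range n, (Polynomial.C y * Polynomial.X - Polynomial.C (t : ℂ))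

lemma Py_eval (y z : ℂ) (n : ℕ) : (Py y n).eval z = fallFac (y * z) n := by
  induction n with
  | zero => simp [Py, fallFac]
  | succ n ih => rw [Py, Finset.prod_range_succ, ← Py, Polynomial.eval_mul, ih, fallFac]; simp

lemma Py_natDegree (y : ℂ) (n : ℕ) : (Py y n).natDegree ≤ n := by
  refine le_trans (Polynomial.natDegree_prod_le _ _) ?_
  calc ∑ t ∈ Finset.range n, (Polynomial.C y * Polynomial.X - Polynomial.C (t : ℂ)).natDegree
      ≤ ∑ _t ∈ Finset.range n, 1 := by
        refine Finset.sum_le_sum fun t _ => ?_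
        refine le_trans (Polynomial.natDegree_sub_le _ _) ?_
        simp [Polynomial.natDegree_C]
        exact le_trans (Polynomial.natDegree_mul_le) (by simp)
    _ = n := by simp

lemma fwd_iter_zero (m : ℕ) : (fwdDiff (1:ℕ))^[m] (0 : ℕ → ℂ) = 0 := by
  induction m with
  | zero => rfl
  | succ m ih => rw [Function.iterate_succ_apply, show fwdDiff (1:ℕ) (0 : ℕ → ℂ) = 0 by
      funext i; simp [fwdDiff], ih]

lemma fwd_poly_vanish : ∀ (m : ℕ) (P : Polynomial ℂ), P.natDegree < m →
    (fwdDiff (1:ℕ))^[m] (fun i : ℕ => P.eval (i : ℂ)) = 0 := by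
  intro m
  induction m with
  | zero => intro P h; omega
  | succ m ih =>
    intro P h
    rw [Function.iterate_succ_apply]
    have hQ : fwdDiff (1:ℕ) (fun i : ℕ => P.eval (i : ℂ))
        = fun i : ℕ => (P.comp (Polynomial.X + Polynomial.C 1) - P).eval (i : ℂ) := by
      funext i
      simp only [fwdDiff, Polynomial.eval_sub, Polynomial.eval_comp, Polynomial.eval_add,
        Polynomial.eval_X, Polynomial.eval_C]
      push_cast
      ring
    rw [hQ]
    rcases Nat.eq_zero_or_pos P.natDegree with h0 | h0
    · obtain ⟨a, rfl⟩ := Polynomial.natDegree_eq_zero.mp h0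
      have : (fun i : ℕ => ((Polynomial.C a).comp (Polynomial.X + Polynomial.C 1)
          - Polynomial.C a).eval (i : ℂ)) = (0 : ℕ → ℂ) := by
        funext i; simp
      rw [this, fwd_iter_zero]
    · apply ih
      set Q := P.comp (Polynomial.X + Polynomial.C 1) - P with hQdef
      rcases eq_or_ne Q 0 with hq0 | hq0
      · rw [hq0]; simpa using lt_of_lt_of_le h0 (Nat.lt_succ_iff.mp h)
      · have hP0 : P ≠ 0 := fun hP => by simp [hP] at h0
        have hnd : (P.comp (Polynomial.X + Polynomial.C 1)).natDegree = P.natDegree := by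
          rw [Polynomial.natDegree_comp, Polynomial.natDegree_X_add_C, mul_one]
        have hc0 : P.comp (Polynomial.X + Polynomial.C 1) ≠ 0 := by
          intro hc
          rw [hc, Polynomial.natDegree_zero] at hnd
          omega
        have hdeg : (P.comp (Polynomial.X + Polynomial.C 1)).degree = P.degree := by
          rw [Polynomial.degree_eq_natDegree hc0, Polynomial.degree_eq_natDegree hP0, hnd]
        have hlc : (P.comp (Polynomial.X + Polynomial.C 1)).leadingCoeff = P.leadingCoeff := by
          rw [Polynomial.leadingCoeff_comp (by rw [Polynomial.natDegree_X_add_C]; norm_num),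
            Polynomial.leadingCoeff_X_add_C, one_pow, mul_one]
        have := Polynomial.degree_sub_lt hdeg hc0 hlc
        rw [hdeg] at this
        have h2 : Q.natDegree < P.natDegree := Polynomial.natDegree_lt_natDegree hq0 this
        omega

lemma fwd_eq_sum (f : ℕ → ℂ) (m : ℕ) :
    (fwdDiff (1:ℕ))^[m] f 0
      = ∑ i ∈ Finset.range (m+1), (-1:ℂ)^(m-i) * (m.choose i : ℂ) * f i := by
  rw [fwdDiff_iter_eq_sum_shift]
  apply Finset.sum_congr rfl
  intro i _
  have h0 : (0 + i • 1 : ℕ) = i := by simp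
  rw [h0, zsmul_eq_mul]
  push_cast
  ring

lemma newton_nat (P : Polynomial ℂ) (n : ℕ) (hP : P.natDegree ≤ n) (r : ℕ) :
    P.eval (r : ℂ) = ∑ m ∈ Finset.range (n+1),
      (r.choose m : ℂ) * (fwdDiff (1:ℕ))^[m] (fun i : ℕ => P.eval (i:ℂ)) 0 := by
  set f : ℕ → ℂ := fun i : ℕ => P.eval (i:ℂ) with hf
  set N := max r n with hN
  have h1 := shift_eq_sum_fwdDiff_iter (1:ℕ) f r 0
  simp only [smul_eq_mul, mul_one, zero_add, nsmul_eq_mul] at h1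
  have e1 : (∑ m ∈ Finset.range (r+1), (r.choose m : ℂ) * (fwdDiff (1:ℕ))^[m] f 0)
      = ∑ m ∈ Finset.range (N+1), (r.choose m : ℂ) * (fwdDiff (1:ℕ))^[m] f 0 := by
    apply Finset.sum_subset (Finset.range_subset_range.mpr (by omega))
    intro m hm1 hm2
    simp only [Finset.mem_range] at hm1 hm2
    rw [Nat.choose_eq_zero_of_lt (by omega)]
    simp
  have e2 : (∑ m ∈ Finset.range (n+1), (r.choose m : ℂ) * (fwdDiff (1:ℕ))^[m] f 0)
      = ∑ m ∈ Finset.range (N+1), (r.choose m : ℂ) * (fwdDiff (1:ℕ))^[m] f 0 := by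
    apply Finset.sum_subset (Finset.range_subset_range.mpr (by omega))
    intro m hm1 hm2
    simp only [Finset.mem_range] at hm1 hm2
    rw [hf, fwd_poly_vanish m P (by omega)]
    simp
  show f r = _
  rw [e2, ← e1]
  exact h1

lemma newton_complex (P : Polynomial ℂ) (n : ℕ) (hP : P.natDegree ≤ n) (z : ℂ) :
    P.eval z = ∑ m ∈ Finset.range (n+1),
      fallFac z m / (m.factorial : ℂ) * (fwdDiff (1:ℕ))^[m] (fun i : ℕ => P.eval (i:ℂ)) 0 := by
  set f : ℕ → ℂ := fun i : ℕ => P.eval (i:ℂ) with hf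
  set Q : Polynomial ℂ := ∑ m ∈ Finset.range (n+1),
    Polynomial.C ((fwdDiff (1:ℕ))^[m] f 0 / (m.factorial : ℂ)) * descPochhammer ℂ m with hQ
  have hQeval : ∀ w : ℂ, Q.eval w = ∑ m ∈ Finset.range (n+1),
      fallFac w m / (m.factorial : ℂ) * (fwdDiff (1:ℕ))^[m] f 0 := by
    intro w
    rw [hQ, Polynomial.eval_finset_sum]
    apply Finset.sum_congr rfl; intro m _
    rw [Polynomial.eval_mul, Polynomial.eval_C, fallFac_eq_poch]; ring
  have hPQ : P = Q := by
    apply Polynomial.eq_of_infinite_eval_eq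
    apply Set.Infinite.mono (s := Set.range (fun r : ℕ => (r:ℂ)))
    · rintro _ ⟨r, rfl⟩
      simp only [Set.mem_setOf_eq]
      rw [hQeval, newton_nat P n hP r]
      apply Finset.sum_congr rfl; intro m hm
      rw [fallFac_nat_s18, Nat.descFactorial_eq_factorial_mul_choose]
      have hm0 : (m.factorial : ℂ) ≠ 0 := by exact_mod_cast m.factorial_ne_zero
      push_cast
      field_simp
      rfl
    · exact Set.infinite_range_of_injective Nat.cast_injective
  rw [hPQ, hQeval]

/-- The matrix `M(x)`. -/
def Mx (x : ℂ) (k n : ℕ) : ℂ := (1 / (k.factorial : ℂ)) *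
  ∑ j ∈ Finset.range (k + 1), (-1 : ℂ) ^ (k - j) * (k.choose j : ℂ) * fallFac (x * j) n

lemma Mx_eq_fwd (x : ℂ) (k n : ℕ) :
    Mx x k n = (1 / (k.factorial : ℂ))
      * (fwdDiff (1:ℕ))^[k] (fun i : ℕ => (Py x n).eval (i:ℂ)) 0 := by
  rw [Mx, fwd_eq_sum]
  congr 1
  apply Finset.sum_congr rfl; intro j _
  rw [Py_eval]

lemma Mx_vanish (x : ℂ) (k m : ℕ) (h : m < k) : Mx x k m = 0 := by
  rw [Mx_eq_fwd, fwd_poly_vanish k (Py x m) (lt_of_le_of_lt (Py_natDegree x m) h)]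
  simp

lemma Mx_mul (x y : ℂ) (k n : ℕ) (hk : 1 ≤ k) (hkn : k ≤ n) :
    ∑ m ∈ Finset.Icc k n, Mx x k m * Mx y m n = Mx (x * y) k n := by
  have hext : ∑ m ∈ Finset.Icc k n, Mx x k m * Mx y m n
      = ∑ m ∈ Finset.range (n+1), Mx x k m * Mx y m n := by
    apply Finset.sum_subset
    · intro m hm
      simp only [Finset.mem_Icc] at hm
      simp only [Finset.mem_range]
      omega
    · intro m hm1 hm2
      simp only [Finset.mem_range] at hm1
      simp only [Finset.mem_Icc] at hm2
      rw [Mx_vanish x k m (by omega), zero_mul]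
  rw [hext]
  have hD : ∀ m : ℕ, (∑ i ∈ Finset.range (m+1),
      (-1:ℂ)^(m-i) * (m.choose i : ℂ) * fallFac (y * i) n)
      = (fwdDiff (1:ℕ))^[m] (fun i : ℕ => (Py y n).eval (i:ℂ)) 0 := by
    intro m
    rw [fwd_eq_sum]
    apply Finset.sum_congr rfl; intro i _
    rw [Py_eval]
  have key : ∀ j : ℕ, fallFac (x * y * j) n = ∑ m ∈ Finset.range (n+1),
      fallFac (x * j) m / (m.factorial : ℂ)
        * (fwdDiff (1:ℕ))^[m] (fun i : ℕ => (Py y n).eval (i:ℂ)) 0 := by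
    intro j
    have h := newton_complex (Py y n) n (Py_natDegree y n) (x * j)
    have harg : (x * y * (j:ℂ)) = y * (x * (j:ℂ)) := by ring
    rw [harg, ← Py_eval]
    exact h
  calc ∑ m ∈ Finset.range (n+1), Mx x k m * Mx y m n
      = ∑ m ∈ Finset.range (n+1), ∑ j ∈ Finset.range (k+1),
          (1 / (k.factorial : ℂ)) * ((-1:ℂ)^(k-j) * (k.choose j : ℂ))
            * (fallFac (x * j) m / (m.factorial : ℂ)
                * (fwdDiff (1:ℕ))^[m] (fun i : ℕ => (Py y n).eval (i:ℂ)) 0) := by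
        apply Finset.sum_congr rfl; intro m _
        rw [Mx, Mx, hD m, Finset.mul_sum, Finset.sum_mul]
        apply Finset.sum_congr rfl; intro j _
        ring
    _ = ∑ j ∈ Finset.range (k+1), ∑ m ∈ Finset.range (n+1),
          (1 / (k.factorial : ℂ)) * ((-1:ℂ)^(k-j) * (k.choose j : ℂ))
            * (fallFac (x * j) m / (m.factorial : ℂ)
                * (fwdDiff (1:ℕ))^[m] (fun i : ℕ => (Py y n).eval (i:ℂ)) 0) :=
        Finset.sum_comm
    _ = (1 / (k.factorial : ℂ)) * ∑ j ∈ Finset.range (k+1),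
          (-1:ℂ)^(k-j) * (k.choose j : ℂ) * fallFac (x * y * j) n := by
        rw [Finset.mul_sum]
        apply Finset.sum_congr rfl; intro j _
        rw [key j, Finset.mul_sum, Finset.mul_sum]
        apply Finset.sum_congr rfl; intro m _
        ring
    _ = Mx (x * y) k n := rfl

lemma Mx_one (k n : ℕ) (hk : 1 ≤ k) (hkn : k ≤ n) : Mx 1 k n = triId k n := by
  have hfz : ∀ j : ℕ, j < n → fallFac ((1:ℂ) * j) n = 0 := by
    intro j hj
    rw [one_mul, fallFac_nat_s18, Nat.descFactorial_eq_zero_iff_lt.mpr hj, Nat.cast_zero]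
  rw [Mx, triId]
  rcases eq_or_lt_of_le hkn with rfl | hlt
  · rw [if_pos rfl, Finset.sum_range_succ]
    rw [Finset.sum_eq_zero (fun j hj => by
      rw [hfz j (Finset.mem_range.mp hj), mul_zero]), zero_add]
    rw [Nat.sub_self, pow_zero, Nat.choose_self, one_mul, Nat.cast_one, one_mul, one_mul,
      fallFac_nat_s18, Nat.descFactorial_self]
    have hk0 : (k.factorial : ℂ) ≠ 0 := by exact_mod_cast k.factorial_ne_zero
    field_simp
  · rw [if_neg (by omega)]
    rw [Finset.sum_eq_zero (fun j hj => by
      have : j < n := by simp only [Finset.mem_range] at hj; omega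
      rw [hfz j this, mul_zero]), mul_zero]

/-- Example: for `α ≠ 0` and `[A]_{k,n} = (1/k!)·∑_{j=0}^{k} (-1)^{k-j}·C(k,j)·(αj)_n`
(the values `B_{n,k}((1+t)^α - 1)`), one has
`[A^s]_{k,n} = (1/k!)·∑_{j=0}^{k} (-1)^{k-j}·C(k,j)·(α^s j)_n`. -/
theorem stmt18 (α : ℂ) (hα : α ≠ 0)
    (A : ℕ → ℕ → ℂ)
    (hAtri : ∀ k n, n < k → A k n = 0)
    (hA : ∀ k n, 1 ≤ k → k ≤ n →
      A k n = (1 / (k.factorial : ℂ)) *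
        ∑ j ∈ Finset.range (k + 1),
          (-1 : ℂ) ^ (k - j) * (k.choose j : ℂ) * fallFac (α * j) n)
    (s : ℕ) (k n : ℕ) (hk : 1 ≤ k) (hkn : k ≤ n) :
    triPow A s k n = (1 / (k.factorial : ℂ)) *
      ∑ j ∈ Finset.range (k + 1),
        (-1 : ℂ) ^ (k - j) * (k.choose j : ℂ) * fallFac (α ^ s * j) n := by
  show triPow A s k n = Mx (α ^ s) k n
  induction s generalizing k n with
  | zero =>
    rw [pow_zero]
    show triId k n = Mx 1 k n
    exact (Mx_one k n hk hkn).symm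
  | succ s ih =>
    show triMul (triPow A s) A k n = _
    rw [triMul]
    have hterm : ∀ m ∈ Finset.Icc k n, triPow A s k m * A m n = Mx (α ^ s) k m * Mx α m n := by
      intro m hm
      simp only [Finset.mem_Icc] at hm
      rw [ih k m hk hm.1, hA m n (by omega) hm.2]
      rfl
    rw [Finset.sum_congr rfl hterm, Mx_mul (α ^ s) α k n hk hkn, ← pow_succ]

end
end
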